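/- Let k ≥ 3, m ≥ 0 and n ≥ k−1 be integers. Then #{Δ ∈ P_k(m,n) : d_1 = d_{k−1} ≥ 2, α_1 = d_1, α_2 = 0, and β_1 < d_1} = #{Δ ∈ P_k(m,n+1) : d_1 ≥ 3, d_i = d_1 − 1 for all 2 ≤ i ≤ k−2, d_{k−1} = d_1 − 2, γ^1 = ⋯ = γ^{k−2} = ∅, α_1 = d_1 − 2, and α_2 = 0}. -/

import Mathlib

/-- A partition: a finite nonincreasing list of positive integers. -/
structure Partn where
  parts : List ℕ
  sorted : parts.Pairwise (· ≥ ·)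
  pos : ∀ x ∈ parts, 0 < x

namespace Partn

/-- The weight `|λ|` of a partition: the sum of its parts. -/
def wt (p : Partn) : ℕ := p.parts.sum

/-- The length `ℓ(λ)`: the number of parts. -/
def len (p : Partn) : ℕ := p.parts.length

/-- The `j`-th largest part `λ_j` (1-indexed), with `λ_j = 0` for `j > ℓ(λ)`. -/
def part (p : Partn) (j : ℕ) : ℕ := p.parts.getD (j - 1) 0

/-- `f_j(λ)`: the number of parts of `λ` equal to `j`. -/
def freq (p : Partn) (j : ℕ) : ℕ := p.parts.count j

/-- The empty partition. -/
def empty : Partn := ⟨[], List.Pairwise.nil, by simp⟩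

end Partn

/-- The type of `(2k-1)`-tuples `(α, β, γ^1, …, γ^{k-2}, ϖ^1, …, ϖ^{k-1})`. -/
abbrev PTuple (k : ℕ) : Type :=
  Partn × Partn × (Fin (k - 2) → Partn) × (Fin (k - 1) → Partn)

/-- `d_j := ℓ(ϖ^j)` (1-indexed, `0` out of range). -/
def dIdx (k : ℕ) (w : Fin (k - 1) → Partn) (j : ℕ) : ℕ :=
  if h : j - 1 < k - 1 then (w ⟨j - 1, h⟩).len else 0

/-- `γ^j` (1-indexed, the empty partition out of range). -/
def gIdx (k : ℕ) (g : Fin (k - 2) → Partn) (j : ℕ) : Partn :=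
  if h : j - 1 < k - 2 then g ⟨j - 1, h⟩ else Partn.empty

/-- Membership in Garvan-type set `P_k(m, n)` of `(2k-1)`-tuples of partitions. -/
def PkMem (k : ℕ) (m : ℤ) (n : ℕ) (t : PTuple k) : Prop :=
  (∀ i : Fin (k - 1), (t.2.2.2 i).parts =
      List.replicate (t.2.2.2 i).len (t.2.2.2 i).len) ∧
  (∀ j, 1 ≤ j → j + 1 ≤ k - 1 → dIdx k t.2.2.2 (j + 1) ≤ dIdx k t.2.2.2 j) ∧
  1 ≤ dIdx k t.2.2.2 (k - 1) ∧
  (∀ x ∈ t.1.parts, x ≤ dIdx k t.2.2.2 (k - 1)) ∧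
  (∀ x ∈ t.2.1.parts, x ≤ dIdx k t.2.2.2 (k - 1)) ∧
  (t.1.len : ℤ) - (t.2.1.len : ℤ) = m ∧
  (∀ j, 1 ≤ j → j ≤ k - 2 →
      (gIdx k t.2.2.1 j).len ≤ dIdx k t.2.2.2 j - dIdx k t.2.2.2 (j + 1)) ∧
  t.1.wt + t.2.1.wt + (∑ i, (t.2.2.1 i).wt) + (∑ i, (t.2.2.2 i).wt) = n

lemma Partn.ext' {p q : Partn} (h : p.parts = q.parts) : p = q := by
  cases p; cases q; simp_all

def sqp (a : ℕ) : Partn :=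
  ⟨List.replicate a a, by simp [List.Pairwise, List.pairwise_replicate],
   fun x hx => by rcases List.mem_replicate.1 hx with ⟨h1, rfl⟩; omega⟩

@[simp] lemma sqp_parts (a : ℕ) : (sqp a).parts = List.replicate a a := rfl
@[simp] lemma sqp_len (a : ℕ) : (sqp a).len = a := by simp [Partn.len, sqp]
@[simp] lemma sqp_wt (a : ℕ) : (sqp a).wt = a * a := by
  simp [Partn.wt, sqp, List.sum_replicate, smul_eq_mul]

def single (a : ℕ) : Partn :=
  ⟨List.replicate (min a 1) a, by simp [List.Pairwise, List.pairwise_replicate],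
   fun x hx => by rcases List.mem_replicate.1 hx with ⟨h1, rfl⟩; omega⟩

lemma single_parts {a : ℕ} (h : 1 ≤ a) : (single a).parts = [a] := by
  have : min a 1 = 1 := by omega
  simp [single, this]

@[simp] lemma empty_wt : Partn.empty.wt = 0 := rfl
@[simp] lemma empty_len : Partn.empty.len = 0 := rfl

lemma parts_single_of_part {p : Partn} {a : ℕ} (ha : 1 ≤ a)
    (h1 : p.part 1 = a) (h2 : p.part 2 = 0) : p.parts = [a] := by
  rcases hp : p.parts with _ | ⟨x, _ | ⟨y, l⟩⟩
  · simp [Partn.part, hp] at h1; omega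
  · simp [Partn.part, hp] at h1; rw [h1]
  · have hy : 0 < y := p.pos y (by rw [hp]; simp)
    simp [Partn.part, hp] at h2; omega

lemma Partn.le_part_one (p : Partn) {x : ℕ} (hx : x ∈ p.parts) : x ≤ p.part 1 := by
  rcases hp : p.parts with _ | ⟨a, l⟩
  · rw [hp] at hx; simp at hx
  · rw [hp] at hx
    have hs := p.sorted
    rw [hp] at hs
    have : p.part 1 = a := by simp [Partn.part, hp]
    rw [this]
    rcases List.mem_cons.1 hx with rfl | h
    · exact le_refl x
    · exact List.rel_of_pairwise_cons hs h

lemma Partn.part_one_cases (p : Partn) : p.part 1 = 0 ∨ p.part 1 ∈ p.parts := by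
  rcases hp : p.parts with _ | ⟨a, l⟩
  · left; simp [Partn.part, hp]
  · right; simp [Partn.part, hp]

set_option maxHeartbeats 1000000 in
lemma sum_special {N : ℕ} (hN : 2 ≤ N) (f : Fin N → ℕ) (A B C : ℕ)
    (h0 : f ⟨0, by omega⟩ = A) (h1 : f ⟨N - 1, by omega⟩ = B)
    (hC : ∀ i : Fin N, (i : ℕ) ≠ 0 → (i : ℕ) ≠ N - 1 → f i = C) :
    ∑ i, f i = A + B + (N - 2) * C := by
  have hne : (⟨N - 1, by omega⟩ : Fin N) ≠ ⟨0, by omega⟩ := by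
    simp [Fin.ext_iff]; omega
  rw [← Finset.add_sum_erase _ f (Finset.mem_univ (⟨0, by omega⟩ : Fin N))]
  rw [← Finset.add_sum_erase _ f (Finset.mem_erase.2 ⟨hne, Finset.mem_univ _⟩)]
  have hrest : ∀ i ∈ (Finset.univ.erase (⟨0, by omega⟩ : Fin N)).erase ⟨N - 1, by omega⟩,
      f i = C := by
    intro i hi
    rw [Finset.mem_erase, Finset.mem_erase] at hi
    exact hC i (by simpa [Fin.ext_iff] using hi.2.1) (by simpa [Fin.ext_iff] using hi.1)
  rw [Finset.sum_congr rfl hrest, Finset.sum_const, smul_eq_mul,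
    Finset.card_erase_of_mem (Finset.mem_erase.2 ⟨hne, Finset.mem_univ _⟩),
    Finset.card_erase_of_mem (Finset.mem_univ _), Finset.card_univ, Fintype.card_fin,
    h0, h1]
  have : N - 1 - 1 = N - 2 := by omega
  rw [this, add_assoc]


lemma dIdx_eq {k : ℕ} (w : Fin (k - 1) → Partn) {j : ℕ} (h : j - 1 < k - 1) :
    dIdx k w j = (w ⟨j - 1, h⟩).len := dif_pos h

lemma dIdx_fin {k : ℕ} (w : Fin (k - 1) → Partn) (i : Fin (k - 1)) :
    dIdx k w ((i : ℕ) + 1) = (w i).len := by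
  rw [dIdx_eq w (by simpa using i.isLt)]
  exact congrArg (fun j => (w j).len) (Fin.ext (by simp))

lemma gIdx_fin {k : ℕ} (g : Fin (k - 2) → Partn) (i : Fin (k - 2)) :
    gIdx k g ((i : ℕ) + 1) = g i := by
  unfold gIdx
  rw [dif_pos (by simpa using i.isLt)]
  exact congrArg g (Fin.ext (by simp))

def Fmap (k : ℕ) (p : ℕ × Partn) : PTuple k :=
  (single p.1, p.2, fun _ => Partn.empty, fun _ => sqp p.1)

def Gmap (k : ℕ) (p : ℕ × Partn) : PTuple k :=
  (single (p.1 - 1), p.2, fun _ => Partn.empty,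
    fun i => sqp (if (i : ℕ) = 0 then p.1 + 1 else if (i : ℕ) = k - 2 then p.1 - 1 else p.1))

def Uset (k : ℕ) (m : ℤ) (n : ℕ) : Set (ℕ × Partn) :=
  {p | 2 ≤ p.1 ∧ (∀ x ∈ p.2.parts, x ≤ p.1 - 1) ∧ (1 : ℤ) - (p.2.len : ℤ) = m ∧
    p.1 + p.2.wt + (k - 1) * (p.1 * p.1) = n}

lemma Fmap_inj {k : ℕ} (hk : 3 ≤ k) : Function.Injective (Fmap k) := by
  intro p q h
  have h4 := congrArg (fun t : PTuple k => (t.2.2.2 ⟨0, by omega⟩).len) h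
  simp only [Fmap, sqp_len] at h4
  have h2 := congrArg (fun t : PTuple k => t.2.1) h
  simp only [Fmap] at h2
  exact Prod.ext h4 h2

lemma Gmap_inj {k : ℕ} (hk : 3 ≤ k) : Function.Injective (Gmap k) := by
  intro p q h
  have h4 := congrArg (fun t : PTuple k => (t.2.2.2 ⟨0, by omega⟩).len) h
  simp [Gmap] at h4
  have h2 := congrArg (fun t : PTuple k => t.2.1) h
  simp only [Gmap] at h2
  exact Prod.ext (by omega) h2

lemma weight_arith {kk D B n : ℕ} (hkk : 2 ≤ kk) (hD : 3 ≤ D)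
    (h : (D - 1 - 1) + B + 0 + (D * D + (D - 2) * (D - 2) + (kk - 2) * ((D - 1) * (D - 1)))
        = n + 1) :
    (D - 1) + B + kk * ((D - 1) * (D - 1)) = n := by
  obtain ⟨e, rfl⟩ : ∃ e, D = e + 3 := ⟨D - 3, by omega⟩
  obtain ⟨j, rfl⟩ : ∃ j, kk = j + 2 := ⟨kk - 2, by omega⟩
  have e1 : e + 3 - 1 = e + 2 := by omega
  have e2 : e + 3 - 2 = e + 1 := by omega
  have e4 : j + 2 - 2 = j := by omega
  rw [e4] at h
  rw [e2] at h
  rw [e1] at h ⊢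
  have e5 : e + 2 - 1 = e + 1 := by omega
  rw [e5] at h
  nlinarith [h]

lemma weight_arith2 {kk d B n : ℕ} (hkk : 2 ≤ kk) (hd : 2 ≤ d)
    (h : d + B + kk * (d * d) = n) :
    (d - 1) + B + 0 + ((d + 1) * (d + 1) + (d - 1) * (d - 1) + (kk - 2) * (d * d)) = n + 1 := by
  obtain ⟨e, rfl⟩ : ∃ e, d = e + 2 := ⟨d - 2, by omega⟩
  obtain ⟨j, rfl⟩ : ∃ j, kk = j + 2 := ⟨kk - 2, by omega⟩
  have e1 : e + 2 - 1 = e + 1 := by omega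
  have e4 : j + 2 - 2 = j := by omega
  rw [e1, e4]
  nlinarith [h]


lemma S_eq (k : ℕ) (m : ℤ) (n : ℕ) (hk : 3 ≤ k) :
    {t : PTuple k | PkMem k m n t ∧
        dIdx k t.2.2.2 1 = dIdx k t.2.2.2 (k - 1) ∧ 2 ≤ dIdx k t.2.2.2 1 ∧
        t.1.part 1 = dIdx k t.2.2.2 1 ∧ t.1.part 2 = 0 ∧
        t.2.1.part 1 < dIdx k t.2.2.2 1} = Fmap k '' Uset k m n := by
  ext t
  simp only [Set.mem_setOf_eq, Set.mem_image]
  constructor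
  · rintro ⟨⟨hsq, hmono, hd1, hα, hβ, hlen, hγ, hwt⟩, hdd, hd2, ha1, ha2, hb1⟩
    obtain ⟨α, β, γ, w⟩ := t
    simp only at hsq hmono hd1 hα hβ hlen hγ hwt hdd hd2 ha1 ha2 hb1
    have chain : ∀ i j, 1 ≤ i → i ≤ j → j ≤ k - 1 → dIdx k w j ≤ dIdx k w i := by
      intro i j h1 hij
      induction j, hij using Nat.le_induction with
      | base => intro _; exact le_refl _
      | succ j hj ih =>
        intro hjk
        exact le_trans (hmono j (by omega) hjk) (ih (by omega))
    have alld : ∀ j, 1 ≤ j → j ≤ k - 1 → dIdx k w j = dIdx k w 1 := by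
      intro j h1 h2
      have l1 := chain 1 j le_rfl h1 h2
      have l2 := chain j (k - 1) h1 h2 le_rfl
      omega
    obtain ⟨d, hd⟩ : ∃ d, dIdx k w 1 = d := ⟨_, rfl⟩
    have hαeq : α = single d := by
      apply Partn.ext'
      rw [parts_single_of_part (by omega) (ha1.trans hd) ha2, single_parts (by omega)]
    have hβle : ∀ x ∈ β.parts, x ≤ d - 1 := by
      intro x hx
      have := Partn.le_part_one β hx
      omega
    have hγeq : γ = fun _ => Partn.empty := by
      funext i
      apply Partn.ext'
      have hi2 : (i : ℕ) < k - 2 := i.isLt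
      have h := hγ ((i : ℕ) + 1) (by omega) (by omega)
      rw [gIdx_fin] at h
      have e1 := alld ((i : ℕ) + 1) (by omega) (by omega)
      have e2 := alld ((i : ℕ) + 1 + 1) (by omega) (by omega)
      have hl : (γ i).len = 0 := by omega
      exact List.length_eq_zero_iff.1 hl
    have hweq : w = fun _ => sqp d := by
      funext i
      apply Partn.ext'
      have hl : (w i).len = d := by
        rw [← dIdx_fin w i, alld _ (by omega) (by have := i.isLt; omega)]
        exact hd
      rw [hsq i, hl, sqp_parts]
    refine ⟨(d, β), ⟨by omega, hβle, ?_, ?_⟩, ?_⟩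
    · have h1 : α.len = 1 := by
        rw [hαeq]
        simp [Partn.len, single_parts (show 1 ≤ d by omega)]
      rw [h1] at hlen
      simpa using hlen
    · have hwα : α.wt = d := by
        rw [hαeq]
        simp [Partn.wt, single_parts (show 1 ≤ d by omega)]
      have hwγ : (∑ i, (γ i).wt) = 0 := by rw [hγeq]; simp
      rw [hwα, hwγ, hweq, Finset.sum_const, Finset.card_univ, Fintype.card_fin,
        smul_eq_mul, sqp_wt] at hwt
      linarith [hwt]
    · show Fmap k (d, β) = (α, β, γ, w)
      rw [hαeq, hγeq, hweq]
      rfl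
  · rintro ⟨⟨d, β⟩, hU, rfl⟩
    obtain ⟨hd2, hβle, hlen, hwtU⟩ := hU
    simp only at hd2 hβle hlen hwtU
    have hdI : ∀ j : ℕ, j - 1 < k - 1 →
        dIdx k (Fmap k (d, β)).2.2.2 j = d := by
      intro j h
      rw [show (Fmap k (d, β)).2.2.2 = fun _ => sqp d from rfl, dIdx_eq _ h, sqp_len]
    have hγI : ∀ j : ℕ, (gIdx k (Fmap k (d, β)).2.2.1 j).len = 0 := by
      intro j
      show (gIdx k (fun _ => Partn.empty) j).len = 0
      unfold gIdx
      split <;> rfl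
    have hsp : (single d).parts = [d] := single_parts (by omega)
    refine ⟨⟨?_, ?_, ?_, ?_, ?_, ?_, ?_, ?_⟩, ?_, ?_, ?_, ?_, ?_⟩
    · intro i
      show (sqp d).parts = List.replicate (sqp d).len (sqp d).len
      rw [sqp_len, sqp_parts]
    · intro j h1 h2
      rw [hdI _ (by omega), hdI _ (by omega)]
    · rw [hdI _ (by omega)]; omega
    · intro x hx
      rw [hdI _ (by omega)]
      have hx' : x ∈ (single d).parts := hx
      rw [hsp] at hx'
      simp at hx'
      omega
    · intro x hx
      rw [hdI _ (by omega)]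
      have hx' : x ∈ β.parts := hx
      have := hβle x hx'
      omega
    · show ((single d).len : ℤ) - (β.len : ℤ) = m
      have h1 : (single d).len = 1 := by simp [Partn.len, hsp]
      rw [h1]
      simpa using hlen
    · intro j _ _
      rw [hγI]
      omega
    · show (single d).wt + β.wt + (∑ _i : Fin (k - 2), Partn.empty.wt)
          + (∑ _i : Fin (k - 1), (sqp d).wt) = n
      have h1 : (single d).wt = d := by simp [Partn.wt, hsp]
      rw [h1, Finset.sum_const, Finset.sum_const, Finset.card_univ, Finset.card_univ,
        Fintype.card_fin, Fintype.card_fin, smul_eq_mul, smul_eq_mul, sqp_wt, empty_wt]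
      have h2 : (k - 2) * 0 = 0 := by omega
      rw [h2]
      linarith [hwtU]
    · rw [hdI _ (by omega), hdI _ (by omega)]
    · rw [hdI _ (by omega)]; omega
    · rw [hdI _ (by omega)]
      show (single d).part 1 = d
      simp [Partn.part, hsp]
    · show (single d).part 2 = 0
      simp [Partn.part, hsp]
    · rw [hdI _ (by omega)]
      rcases Partn.part_one_cases β with h | h
      · show β.part 1 < d
        omega
      · show β.part 1 < d
        have := hβle _ h
        omega

lemma sqp_square (a : ℕ) : (sqp a).parts = List.replicate (sqp a).len (sqp a).len := by
  rw [sqp_len, sqp_parts]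

lemma T_eq (k : ℕ) (m : ℤ) (n : ℕ) (hk : 3 ≤ k) :
    {t : PTuple k | PkMem k m (n + 1) t ∧ 3 ≤ dIdx k t.2.2.2 1 ∧
        (∀ j, 2 ≤ j → j ≤ k - 2 → dIdx k t.2.2.2 j = dIdx k t.2.2.2 1 - 1) ∧
        dIdx k t.2.2.2 (k - 1) = dIdx k t.2.2.2 1 - 2 ∧
        (∀ j, 1 ≤ j → j ≤ k - 2 → (gIdx k t.2.2.1 j).parts = []) ∧
        t.1.part 1 = dIdx k t.2.2.2 1 - 2 ∧ t.1.part 2 = 0} = Gmap k '' Uset k m n := by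
  ext t
  simp only [Set.mem_setOf_eq, Set.mem_image]
  constructor
  · rintro ⟨⟨hsq, hmono, hd1, hα, hβ, hlen, hγ, hwt⟩, hd3, hmid, hlast, hγnil, ha1, ha2⟩
    obtain ⟨α, β, γ, w⟩ := t
    simp only at hsq hmono hd1 hα hβ hlen hγ hwt hd3 hmid hlast hγnil ha1 ha2
    obtain ⟨D, hD⟩ : ∃ D, dIdx k w 1 = D := ⟨_, rfl⟩
    rw [hD] at hd3 hmid hlast ha1
    have hdall : ∀ j, 1 ≤ j → j ≤ k - 1 →
        dIdx k w j = if j = 1 then D else if j = k - 1 then D - 2 else D - 1 := by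
      intro j h1 h2
      split_ifs with e1 e2
      · rw [e1]; exact hD
      · rw [e2]; exact hlast
      · exact hmid j (by omega) (by omega)
    have hlw : ∀ i : Fin (k - 1), (w i).len =
        if (i : ℕ) = 0 then D else if (i : ℕ) = k - 2 then D - 2 else D - 1 := by
      intro i
      have hi := i.isLt
      rw [← dIdx_fin w i, hdall ((i : ℕ) + 1) (by omega) (by omega)]
      split_ifs <;> omega
    have hweq : w = fun i : Fin (k - 1) =>
        sqp (if (i : ℕ) = 0 then D else if (i : ℕ) = k - 2 then D - 2 else D - 1) := by
      funext i
      apply Partn.ext'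
      rw [hsq i, hlw i, sqp_parts]
    have hαeq : α = single (D - 1 - 1) := by
      apply Partn.ext'
      have e : D - 2 = D - 1 - 1 := by omega
      rw [parts_single_of_part (by omega) ha1 ha2, single_parts (by omega), e]
    have hγeq : γ = fun _ => Partn.empty := by
      funext i
      apply Partn.ext'
      have hi := i.isLt
      have h := hγnil ((i : ℕ) + 1) (by omega) (by omega)
      rw [gIdx_fin] at h
      exact h
    have hwα : α.wt = D - 1 - 1 := by
      rw [hαeq]; simp [Partn.wt, single_parts (show 1 ≤ D - 1 - 1 by omega)]
    have hwγ : (∑ i, (γ i).wt) = 0 := by rw [hγeq]; simp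
    have hww : (∑ i, (w i).wt)
        = D * D + (D - 2) * (D - 2) + (k - 1 - 2) * ((D - 1) * (D - 1)) := by
      refine sum_special (by omega) _ _ _ _ ?_ ?_ ?_
      · rw [hweq]
        show (sqp (if (0 : ℕ) = 0 then D else if (0 : ℕ) = k - 2 then D - 2 else D - 1)).wt
            = D * D
        rw [if_pos rfl, sqp_wt]
      · rw [hweq]
        show (sqp (if (k - 1 - 1 : ℕ) = 0 then D
            else if (k - 1 - 1 : ℕ) = k - 2 then D - 2 else D - 1)).wt = (D - 2) * (D - 2)
        rw [if_neg (by omega), if_pos (by omega : k - 1 - 1 = k - 2), sqp_wt]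
      · intro i h0 hN
        rw [hweq]
        show (sqp (if (i : ℕ) = 0 then D
            else if (i : ℕ) = k - 2 then D - 2 else D - 1)).wt = (D - 1) * (D - 1)
        rw [if_neg h0, if_neg (by omega), sqp_wt]
    rw [hwα, hwγ, hww] at hwt
    refine ⟨(D - 1, β), ⟨by omega, ?_, ?_, ?_⟩, ?_⟩
    · intro x hx
      show x ≤ D - 1 - 1
      have := hβ x hx
      omega
    · show (1 : ℤ) - (β.len : ℤ) = m
      have h1 : α.len = 1 := by
        rw [hαeq]; simp [Partn.len, single_parts (show 1 ≤ D - 1 - 1 by omega)]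
      rw [h1] at hlen
      simpa using hlen
    · show D - 1 + β.wt + (k - 1) * ((D - 1) * (D - 1)) = n
      exact weight_arith (by omega) (by omega) hwt
    · show Gmap k (D - 1, β) = (α, β, γ, w)
      have h4 : (fun i : Fin (k - 1) => sqp (if (i : ℕ) = 0 then (D - 1) + 1
          else if (i : ℕ) = k - 2 then (D - 1) - 1 else D - 1)) = w := by
        rw [hweq]
        funext i
        congr 1
        split_ifs <;> omega
      rw [hαeq, hγeq, ← h4]
      rfl
  · rintro ⟨⟨d, β⟩, hU, rfl⟩
    obtain ⟨hd2, hβle, hlen, hwtU⟩ := hU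
    simp only at hd2 hβle hlen hwtU
    have hdI : ∀ j : ℕ, j - 1 < k - 1 → dIdx k (Gmap k (d, β)).2.2.2 j
        = (if j - 1 = 0 then d + 1 else if j - 1 = k - 2 then d - 1 else d) := by
      intro j h
      rw [show (Gmap k (d, β)).2.2.2 = fun i : Fin (k - 1) => sqp (if (i : ℕ) = 0 then d + 1
        else if (i : ℕ) = k - 2 then d - 1 else d) from rfl, dIdx_eq _ h]
      show (sqp (if j - 1 = 0 then d + 1 else if j - 1 = k - 2 then d - 1 else d)).len = _
      rw [sqp_len]
    have hsp : (single (d - 1)).parts = [d - 1] := single_parts (by omega)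
    refine ⟨⟨?_, ?_, ?_, ?_, ?_, ?_, ?_, ?_⟩, ?_, ?_, ?_, ?_, ?_, ?_⟩
    · intro i
      exact sqp_square _
    · intro j h1 h2
      rw [hdI _ (by omega), hdI _ (by omega)]
      split_ifs <;> omega
    · rw [hdI _ (by omega)]
      split_ifs <;> omega
    · intro x hx
      rw [hdI _ (by omega)]
      have hx' : x ∈ (single (d - 1)).parts := hx
      rw [hsp] at hx'
      simp at hx'
      split_ifs <;> omega
    · intro x hx
      rw [hdI _ (by omega)]
      have hx' : x ∈ β.parts := hx
      have := hβle x hx'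
      split_ifs <;> omega
    · show ((single (d - 1)).len : ℤ) - (β.len : ℤ) = m
      have h1 : (single (d - 1)).len = 1 := by simp [Partn.len, hsp]
      rw [h1]
      simpa using hlen
    · intro j _ _
      have h0 : (gIdx k (Gmap k (d, β)).2.2.1 j).len = 0 := by
        show (gIdx k (fun _ => Partn.empty) j).len = 0
        unfold gIdx
        split <;> rfl
      rw [h0]
      omega
    · show (single (d - 1)).wt + β.wt + (∑ _i : Fin (k - 2), Partn.empty.wt)
          + (∑ i : Fin (k - 1), (sqp (if (i : ℕ) = 0 then d + 1
              else if (i : ℕ) = k - 2 then d - 1 else d)).wt) = n + 1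
      have hww : (∑ i : Fin (k - 1), (sqp (if (i : ℕ) = 0 then d + 1
          else if (i : ℕ) = k - 2 then d - 1 else d)).wt)
          = (d + 1) * (d + 1) + (d - 1) * (d - 1) + (k - 1 - 2) * (d * d) := by
        refine sum_special (by omega) _ _ _ _ ?_ ?_ ?_
        · show (sqp (if (0 : ℕ) = 0 then d + 1
              else if (0 : ℕ) = k - 2 then d - 1 else d)).wt = (d + 1) * (d + 1)
          rw [if_pos rfl, sqp_wt]
        · show (sqp (if (k - 1 - 1 : ℕ) = 0 then d + 1
              else if (k - 1 - 1 : ℕ) = k - 2 then d - 1 else d)).wt = (d - 1) * (d - 1)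
          rw [if_neg (by omega), if_pos (by omega : k - 1 - 1 = k - 2), sqp_wt]
        · intro i h0 hN
          show (sqp (if (i : ℕ) = 0 then d + 1
              else if (i : ℕ) = k - 2 then d - 1 else d)).wt = d * d
          rw [if_neg h0, if_neg (by omega), sqp_wt]
      have h1 : (single (d - 1)).wt = d - 1 := by simp [Partn.wt, hsp]
      have h2 : (∑ _i : Fin (k - 2), Partn.empty.wt) = 0 := by simp
      rw [h1, h2, hww]
      exact weight_arith2 (by omega) hd2 hwtU
    · rw [hdI _ (by omega)]
      split_ifs <;> omega
    · intro j h2 h3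
      rw [hdI _ (by omega), hdI _ (by omega)]
      split_ifs <;> omega
    · rw [hdI _ (by omega), hdI _ (by omega)]
      split_ifs <;> omega
    · intro j h1 h2
      show (gIdx k (fun _ => Partn.empty) j).parts = []
      unfold gIdx
      split <;> rfl
    · show (single (d - 1)).part 1 = dIdx k (Gmap k (d, β)).2.2.2 1 - 2
      rw [hdI _ (by omega)]
      have h1 : (single (d - 1)).part 1 = d - 1 := by simp [Partn.part, hsp]
      rw [h1]
      split_ifs <;> omega
    · show (single (d - 1)).part 2 = 0
      simp [Partn.part, hsp]

/-- Lemma 5.9 (restated). -/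
theorem lem_pp6 (k : ℕ) (m : ℤ) (n : ℕ) (hk : 3 ≤ k) (hm : 0 ≤ m)
    (hn : k - 1 ≤ n) :
    {t : PTuple k | PkMem k m n t ∧
        dIdx k t.2.2.2 1 = dIdx k t.2.2.2 (k - 1) ∧ 2 ≤ dIdx k t.2.2.2 1 ∧
        t.1.part 1 = dIdx k t.2.2.2 1 ∧ t.1.part 2 = 0 ∧
        t.2.1.part 1 < dIdx k t.2.2.2 1}.ncard =
      {t : PTuple k | PkMem k m (n + 1) t ∧ 3 ≤ dIdx k t.2.2.2 1 ∧
        (∀ j, 2 ≤ j → j ≤ k - 2 → dIdx k t.2.2.2 j = dIdx k t.2.2.2 1 - 1) ∧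
        dIdx k t.2.2.2 (k - 1) = dIdx k t.2.2.2 1 - 2 ∧
        (∀ j, 1 ≤ j → j ≤ k - 2 → (gIdx k t.2.2.1 j).parts = []) ∧
        t.1.part 1 = dIdx k t.2.2.2 1 - 2 ∧ t.1.part 2 = 0}.ncard := by
    rw [S_eq k m n hk, T_eq k m n hk,
    Set.ncard_image_of_injOn ((Fmap_inj hk).injOn),
    Set.ncard_image_of_injOn ((Gmap_inj hk).injOn)]
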